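/- Let A₁ be the 6×6 integer matrix with rows [[1,0,0,0,0,0],[0,1,0,0,0,0],[0,0,1,0,0,0],[1,1,0,5,0,0],[2,0,1,0,5,0],[1,2,1,0,0,5]] and L₁ = A₁ℤ⁶. Then the nonzero vectors v ∈ L₁ with ‖v‖² ≤ 5 are exactly ±(0,0,1,0,1,1) (with ‖v‖² = 3), ±(1,0,−1,1,1,0) (with ‖v‖² = 4), and ±(0,1,−1,1,−1,1) (with ‖v‖² = 5). -/

import Mathlib

/-- The basis matrix `A₁` of the first lattice. -/
def paperA1 : Matrix (Fin 6) (Fin 6) ℤ :=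
  !![1,0,0,0,0,0; 0,1,0,0,0,0; 0,0,1,0,0,0; 1,1,0,5,0,0; 2,0,1,0,5,0; 1,2,1,0,0,5]

/-- The lattice `L₁ = A₁ℤ⁶`. -/
def paperL1 : Set (Fin 6 → ℤ) := {v | ∃ z : Fin 6 → ℤ, v = paperA1.mulVec z}

lemma key1 (z : Fin 6 → ℤ) : paperA1.mulVec z =
      ![z 0, z 1, z 2, z 0 + z 1 + 5 * z 3, 2 * z 0 + z 2 + 5 * z 4,
        z 0 + 2 * z 1 + z 2 + 5 * z 5] := by
  simp [paperA1, Matrix.cons_mulVec, Matrix.cons_dotProduct, Matrix.vecTail, Matrix.vecHead,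
    show ((2:Fin 5).succ : Fin 6) = 3 from rfl, show ((2:Fin 4).succ.succ : Fin 6) = 4 from rfl,
    show ((2:Fin 3).succ.succ.succ : Fin 6) = 5 from rfl]
  ring_nf
  exact ⟨trivial, trivial, trivial⟩

lemma mem_iff (v : Fin 6 → ℤ) : v ∈ paperL1 ↔
    (5 ∣ v 3 - v 0 - v 1) ∧ (5 ∣ v 4 - 2*v 0 - v 2) ∧ (5 ∣ v 5 - v 0 - 2*v 1 - v 2) := by
  constructor
  · rintro ⟨z, rfl⟩
    rw [key1]
    exact ⟨⟨z 3, by show z 0 + z 1 + 5 * z 3 - z 0 - z 1 = 5 * z 3; ring⟩,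
      ⟨z 4, by show 2 * z 0 + z 2 + 5 * z 4 - 2 * z 0 - z 2 = 5 * z 4; ring⟩,
      ⟨z 5, by show z 0 + 2 * z 1 + z 2 + 5 * z 5 - z 0 - 2 * z 1 - z 2 = 5 * z 5; ring⟩⟩
  · rintro ⟨⟨a, ha⟩, ⟨b, hb⟩, ⟨c, hc⟩⟩
    refine ⟨![v 0, v 1, v 2, a, b, c], ?_⟩
    rw [key1]
    funext i
    fin_cases i
    · rfl
    · rfl
    · rfl
    · show v 3 = v 0 + v 1 + 5 * a; omega
    · show v 4 = 2 * v 0 + v 2 + 5 * b; omega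
    · show v 5 = v 0 + 2 * v 1 + v 2 + 5 * c; omega

lemma vec_eq (v : Fin 6 → ℤ) (a b c d e f : ℤ) :
    v = ![a,b,c,d,e,f] ↔ v 0 = a ∧ v 1 = b ∧ v 2 = c ∧ v 3 = d ∧ v 4 = e ∧ v 5 = f := by
  constructor
  · rintro rfl; exact ⟨rfl, rfl, rfl, rfl, rfl, rfl⟩
  · rintro ⟨h0, h1, h2, h3, h4, h5⟩
    funext i
    fin_cases i <;> assumption

lemma negv (a b c d e f : ℤ) : -(![a,b,c,d,e,f]) = ![-a,-b,-c,-d,-e,-f] := by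
  funext i; fin_cases i <;> rfl

lemma bnd (x : ℤ) (h : x ^ 2 ≤ 5) : x ∈ Finset.Icc (-2:ℤ) 2 :=
  Finset.mem_Icc.mpr (by constructor <;> nlinarith)

set_option synthInstance.maxSize 10000 in
set_option synthInstance.maxHeartbeats 2000000 in
set_option maxRecDepth 100000 in
set_option maxHeartbeats 1000000 in
lemma main_check : ∀ a ∈ Finset.Icc (-2:ℤ) 2, ∀ b ∈ Finset.Icc (-2:ℤ) 2, ∀ c ∈ Finset.Icc (-2:ℤ) 2,
    ∀ d ∈ Finset.Icc (-2:ℤ) 2, ∀ e ∈ Finset.Icc (-2:ℤ) 2, ∀ f ∈ Finset.Icc (-2:ℤ) 2,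
    (5 ∣ d - a - b) → (5 ∣ e - 2*a - c) → (5 ∣ f - a - 2*b - c) →
    ¬(a = 0 ∧ b = 0 ∧ c = 0 ∧ d = 0 ∧ e = 0 ∧ f = 0) →
    a^2 + b^2 + c^2 + d^2 + e^2 + f^2 ≤ 5 →
    (a = 0 ∧ b = 0 ∧ c = 1 ∧ d = 0 ∧ e = 1 ∧ f = 1) ∨
    (a = 0 ∧ b = 0 ∧ c = -1 ∧ d = 0 ∧ e = -1 ∧ f = -1) ∨
    (a = 1 ∧ b = 0 ∧ c = -1 ∧ d = 1 ∧ e = 1 ∧ f = 0) ∨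
    (a = -1 ∧ b = 0 ∧ c = 1 ∧ d = -1 ∧ e = -1 ∧ f = 0) ∨
    (a = 0 ∧ b = 1 ∧ c = -1 ∧ d = 1 ∧ e = -1 ∧ f = 1) ∨
    (a = 0 ∧ b = -1 ∧ c = 1 ∧ d = -1 ∧ e = 1 ∧ f = -1) := by decide

set_option maxHeartbeats 2000000 in
/-- the nonzero vectors `v ∈ L₁` with `‖v‖² ≤ 5` are exactly
`±(0,0,1,0,1,1)` (with `‖v‖² = 3`), `±(1,0,-1,1,1,0)` (with `‖v‖² = 4`), and
`±(0,1,-1,1,-1,1)` (with `‖v‖² = 5`). -/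
theorem stmt_14 :
    {v ∈ paperL1 | v ≠ 0 ∧ (∑ i, (v i) ^ 2) ≤ 5} =
      {![0,0,1,0,1,1], -![0,0,1,0,1,1], ![1,0,-1,1,1,0], -![1,0,-1,1,1,0],
        ![0,1,-1,1,-1,1], -![0,1,-1,1,-1,1]} ∧
    (∑ i, (![0,0,1,0,1,1] : Fin 6 → ℤ) i ^ 2) = 3 ∧
    (∑ i, (![1,0,-1,1,1,0] : Fin 6 → ℤ) i ^ 2) = 4 ∧
    (∑ i, (![0,1,-1,1,-1,1] : Fin 6 → ℤ) i ^ 2) = 5 := by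
  refine ⟨?_, by decide, by decide, by decide⟩
  ext v
  simp only [Set.mem_setOf_eq, Set.mem_insert_iff, Set.mem_singleton_iff]
  constructor
  · rintro ⟨hmem, hnz, hsum⟩
    rw [mem_iff] at hmem
    obtain ⟨hd1, hd2, hd3⟩ := hmem
    rw [Fin.sum_univ_six] at hsum
    have hnz' : ¬(v 0 = 0 ∧ v 1 = 0 ∧ v 2 = 0 ∧ v 3 = 0 ∧ v 4 = 0 ∧ v 5 = 0) := by
      rintro ⟨h0, h1, h2, h3, h4, h5⟩
      exact hnz (funext fun i => by fin_cases i <;> assumption)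
    have m0 := bnd (v 0) (by nlinarith [sq_nonneg (v 1), sq_nonneg (v 2), sq_nonneg (v 3), sq_nonneg (v 4), sq_nonneg (v 5)])
    have m1 := bnd (v 1) (by nlinarith [sq_nonneg (v 0), sq_nonneg (v 2), sq_nonneg (v 3), sq_nonneg (v 4), sq_nonneg (v 5)])
    have m2 := bnd (v 2) (by nlinarith [sq_nonneg (v 0), sq_nonneg (v 1), sq_nonneg (v 3), sq_nonneg (v 4), sq_nonneg (v 5)])
    have m3 := bnd (v 3) (by nlinarith [sq_nonneg (v 0), sq_nonneg (v 1), sq_nonneg (v 2), sq_nonneg (v 4), sq_nonneg (v 5)])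
    have m4 := bnd (v 4) (by nlinarith [sq_nonneg (v 0), sq_nonneg (v 1), sq_nonneg (v 2), sq_nonneg (v 3), sq_nonneg (v 5)])
    have m5 := bnd (v 5) (by nlinarith [sq_nonneg (v 0), sq_nonneg (v 1), sq_nonneg (v 2), sq_nonneg (v 3), sq_nonneg (v 4)])
    have hconc := main_check (v 0) m0 (v 1) m1 (v 2) m2 (v 3) m3 (v 4) m4 (v 5) m5
      hd1 hd2 hd3 hnz' hsum
    rcases hconc with h | h | h | h | h | h
    · exact Or.inl ((vec_eq _ _ _ _ _ _ _).mpr h)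
    · refine Or.inr (Or.inl ?_); rw [negv]
      exact (vec_eq _ _ _ _ _ _ _).mpr ⟨by omega, by omega, by omega, by omega, by omega, by omega⟩
    · exact Or.inr (Or.inr (Or.inl ((vec_eq _ _ _ _ _ _ _).mpr h)))
    · refine Or.inr (Or.inr (Or.inr (Or.inl ?_))); rw [negv]
      exact (vec_eq _ _ _ _ _ _ _).mpr ⟨by omega, by omega, by omega, by omega, by omega, by omega⟩
    · exact Or.inr (Or.inr (Or.inr (Or.inr (Or.inl ((vec_eq _ _ _ _ _ _ _).mpr h)))))
    · refine Or.inr (Or.inr (Or.inr (Or.inr (Or.inr ?_)))); rw [negv]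
      exact (vec_eq _ _ _ _ _ _ _).mpr ⟨by omega, by omega, by omega, by omega, by omega, by omega⟩
  · rintro (rfl | rfl | rfl | rfl | rfl | rfl) <;>
      exact ⟨(mem_iff _).mpr (by decide), by decide, by decide⟩
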